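/- Let c₁ > 0, γ₁ ∈ (0,1], ℓ ∈ (0,1], u = (u_1,…,u_d) ∈ [0,1−ℓ]^d, C := ∏_{j=1}^d [u_j, u_j+ℓ] with vertex set V := ∏_{j=1}^d {u_j, u_j+ℓ}, and let f : C → ℝ be (c₁,γ₁)-gradient-Hölder. Define h : C → ℝ by h(x) := Σ_{v∈V} f(v)·∏_{j=1}^d p_{v_j}(x_j), where p_{v_j}(x_j) := (1 − (x_j − u_j)/ℓ) if v_j = u_j and p_{v_j}(x_j) := (x_j − u_j)/ℓ if v_j = u_j + ℓ. Then h(v) = f(v) for every vertex v ∈ V, and sup_{x∈C} |h(x) − f(x)| ≤ c₁·d·ℓ^{1+γ₁}. -/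

import Mathlib

noncomputable section

/-- The `j`-th partial derivatives of `F`, collected into a vector of `Fin d → ℝ`
(whose norm is the sup-norm of the gradient). -/
noncomputable def gradVec (d : ℕ) (F : (Fin d → ℝ) → ℝ) (x : Fin d → ℝ) : Fin d → ℝ :=
  fun j => fderiv ℝ F x (Pi.single j 1)

/-- `f` is `(c₁,γ₁)`-gradient-Hölder on `E`: it is the restriction to `E` of a `C¹` function
on `ℝ^d` whose gradient is `(c₁,γ₁)`-Hölder on `E` w.r.t. the sup-norm. -/
def GradHolderOn (d : ℕ) (c₁ γ₁ : ℝ) (E : Set (Fin d → ℝ)) (f : (Fin d → ℝ) → ℝ) : Prop :=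
  ∃ F : (Fin d → ℝ) → ℝ, ContDiff ℝ 1 F ∧ Set.EqOn f F E ∧
    ∀ x ∈ E, ∀ y ∈ E, ‖gradVec d F x - gradVec d F y‖ ≤ c₁ * ‖x - y‖ ^ γ₁

/-- The vertex of the cube `∏_j [u_j, u_j + ℓ]` selected by `s : Fin d → Bool`. -/
def vertex (d : ℕ) (ℓ : ℝ) (u : Fin d → ℝ) (s : Fin d → Bool) : Fin d → ℝ :=
  fun j => u j + if s j then ℓ else 0

/-- The multilinear interpolation `h(x) = ∑_{v ∈ V} f(v) ∏_j p_{v_j}(x_j)` of `f` at the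
vertices of the cube `∏_j [u_j, u_j + ℓ]`. -/
noncomputable def interp (d : ℕ) (ℓ : ℝ) (u : Fin d → ℝ) (f : (Fin d → ℝ) → ℝ)
    (x : Fin d → ℝ) : ℝ :=
  ∑ s : Fin d → Bool, f (vertex d ℓ u s) *
    ∏ j, (if s j then (x j - u j) / ℓ else 1 - (x j - u j) / ℓ)

lemma sum_prod_bool (d : ℕ) (a : Fin d → Bool → ℝ) :
    ∑ s : Fin d → Bool, ∏ j, a j (s j) = ∏ j, (a j false + a j true) := by
  have h : ∀ j : Fin d, a j false + a j true = ∑ b : Bool, a j b := by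
    intro j; rw [Fintype.sum_bool]; ring
  simp_rw [h]
  rw [Finset.prod_univ_sum, Fintype.piFinset_univ]

lemma linmap_apply (d : ℕ) (L : (Fin d → ℝ) →L[ℝ] ℝ) (y : Fin d → ℝ) :
    L y = ∑ j, y j * L (Pi.single j 1) := by
  have hy : y = ∑ j, (y j) • (Pi.single j (1 : ℝ) : Fin d → ℝ) := by
    funext k
    simp [Finset.sum_apply, Pi.single_apply]
  conv_lhs => rw [hy]
  rw [map_sum]
  refine Finset.sum_congr rfl fun j _ => ?_
  rw [map_smul, smul_eq_mul]

lemma opNorm_le_sum (d : ℕ) (L : (Fin d → ℝ) →L[ℝ] ℝ) :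
    ‖L‖ ≤ ∑ j, |L (Pi.single j 1)| := by
  refine L.opNorm_le_bound (Finset.sum_nonneg fun j _ => abs_nonneg _) fun y => ?_
  rw [linmap_apply]
  calc ‖∑ j, y j * L (Pi.single j 1)‖ ≤ ∑ j, ‖y j * L (Pi.single j 1)‖ := norm_sum_le _ _
    _ ≤ ∑ j, |L (Pi.single j 1)| * ‖y‖ := by
        refine Finset.sum_le_sum fun j _ => ?_
        rw [norm_mul, mul_comm]
        refine mul_le_mul_of_nonneg_left ?_ (norm_nonneg _)
        simpa using norm_le_pi_norm y j
    _ = (∑ j, |L (Pi.single j 1)|) * ‖y‖ := by rw [Finset.sum_mul]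

/-- The multilinear interpolation of a `(c₁,γ₁)`-gradient-Hölder function at
the vertices of a hypercube of side `ℓ` interpolates `f` at all vertices and is uniformly
`c₁ d ℓ^{1+γ₁}`-close to `f` on the hypercube. -/
theorem stmt9 (d : ℕ) (hd : 1 ≤ d) (c₁ γ₁ ℓ : ℝ) (hc : 0 < c₁)
    (hγ : γ₁ ∈ Set.Ioc (0 : ℝ) 1) (hℓ : ℓ ∈ Set.Ioc (0 : ℝ) 1)
    (u : Fin d → ℝ) (hu : ∀ j, 0 ≤ u j ∧ u j ≤ 1 - ℓ)
    (f : (Fin d → ℝ) → ℝ)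
    (hf : GradHolderOn d c₁ γ₁ (Set.Icc u (fun j => u j + ℓ)) f) :
    (∀ s : Fin d → Bool, interp d ℓ u f (vertex d ℓ u s) = f (vertex d ℓ u s)) ∧
    ∀ x ∈ Set.Icc u (fun j => u j + ℓ),
      |interp d ℓ u f x - f x| ≤ c₁ * d * ℓ ^ (1 + γ₁) := by
  obtain ⟨hγ0, hγ1⟩ := hγ
  obtain ⟨hℓ0, hℓ1⟩ := hℓ
  obtain ⟨F, hF, hEq, hH⟩ := hf
  set E := Set.Icc u (fun j => u j + ℓ) with hE
  have hvmem : ∀ s, vertex d ℓ u s ∈ E := by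
    intro s
    refine ⟨fun j => ?_, fun j => ?_⟩ <;> simp only [vertex] <;> split <;> simp <;> linarith
  -- Part 1
  have hvx : ∀ s s' : Fin d → Bool,
      (∏ j, (if s' j then (vertex d ℓ u s j - u j) / ℓ
        else 1 - (vertex d ℓ u s j - u j) / ℓ)) = if s' = s then 1 else 0 := by
    intro s s'
    by_cases h : s' = s
    · subst h
      rw [if_pos rfl]
      apply Finset.prod_eq_one
      intro j _
      simp only [vertex, add_sub_cancel_left]
      cases hs : s' j <;> simp [hs, div_self hℓ0.ne']
    · rw [if_neg h]
      obtain ⟨j, hj⟩ := Function.ne_iff.mp h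
      apply Finset.prod_eq_zero (Finset.mem_univ j)
      simp only [vertex, add_sub_cancel_left]
      cases hs' : s' j <;> cases hs : s j <;> simp_all [div_self hℓ0.ne']
  have part1 : ∀ s, interp d ℓ u f (vertex d ℓ u s) = f (vertex d ℓ u s) := by
    intro s
    unfold interp
    rw [Finset.sum_eq_single s]
    · rw [hvx s s, if_pos rfl, mul_one]
    · intro s' _ hne; rw [hvx s s', if_neg hne, mul_zero]
    · intro h; exact absurd (Finset.mem_univ s) h
  refine ⟨part1, fun x hx => ?_⟩
  -- Part 2
  have hdiffnorm : ∀ z ∈ E, ∀ y ∈ E, ‖z - y‖ ≤ ℓ := by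
    intro z hz y hy
    rw [pi_norm_le_iff_of_nonneg hℓ0.le]
    intro j
    have h1 : u j ≤ z j := hz.1 j
    have h2 : z j ≤ u j + ℓ := hz.2 j
    have h3 : u j ≤ y j := hy.1 j
    have h4 : y j ≤ u j + ℓ := hy.2 j
    rw [Pi.sub_apply, Real.norm_eq_abs, abs_sub_le_iff]
    constructor <;> linarith
  set L := fderiv ℝ F x with hL
  set t : Fin d → ℝ := fun j => (x j - u j) / ℓ with ht
  set w : (Fin d → Bool) → ℝ := fun s => ∏ j, (if s j then t j else 1 - t j) with hw
  have hw_nonneg : ∀ s, 0 ≤ w s := by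
    intro s
    apply Finset.prod_nonneg
    intro j _
    have hx1 : u j ≤ x j := hx.1 j
    have hx2 : x j ≤ u j + ℓ := hx.2 j
    have h0 : 0 ≤ t j := div_nonneg (by linarith) hℓ0.le
    have h1 : t j ≤ 1 := (div_le_one hℓ0).mpr (by linarith)
    split <;> linarith
  have hw_sum : ∑ s : Fin d → Bool, w s = 1 := by
    show ∑ s : Fin d → Bool, (∏ j, (if s j then t j else 1 - t j)) = 1
    refine Eq.trans (sum_prod_bool d fun j b => if b then t j else 1 - t j) ?_
    simp
  have hmoment : ∀ j0 : Fin d,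
      ∑ s : Fin d → Bool, w s * (vertex d ℓ u s j0 - x j0) = 0 := by
    intro j0
    have key : ∀ s : Fin d → Bool, w s * (vertex d ℓ u s j0 - x j0)
        = ∏ j, ((if s j then t j else 1 - t j) *
            (if j = j0 then (u j + (if s j then ℓ else 0)) - x j else 1)) := by
      intro s
      rw [Finset.prod_mul_distrib,
        Finset.prod_ite_eq' Finset.univ j0
          (fun j => (u j + (if s j then ℓ else 0)) - x j)]
      simp [hw, vertex]
    simp_rw [key]
    refine Eq.trans (sum_prod_bool d fun j b => (if b then t j else 1 - t j) *
      (if j = j0 then (u j + if b then ℓ else 0) - x j else 1)) ?_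
    apply Finset.prod_eq_zero (Finset.mem_univ j0)
    simp only [if_pos rfl, Bool.false_eq_true, if_false, if_true, ht]
    field_simp
    ring
  have hzero : ∑ s : Fin d → Bool, w s * L (vertex d ℓ u s - x) = 0 := by
    have : ∀ s : Fin d → Bool, w s * L (vertex d ℓ u s - x)
        = ∑ j, w s * ((vertex d ℓ u s j - x j) * L (Pi.single j 1)) := by
      intro s
      rw [linmap_apply, Finset.mul_sum]
      refine Finset.sum_congr rfl fun j _ => by rw [Pi.sub_apply]
    simp_rw [this]
    rw [Finset.sum_comm]
    refine Finset.sum_eq_zero fun j _ => ?_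
    have : ∑ s : Fin d → Bool, w s * ((vertex d ℓ u s j - x j) * L (Pi.single j 1))
        = (∑ s : Fin d → Bool, w s * (vertex d ℓ u s j - x j)) * L (Pi.single j 1) := by
      rw [Finset.sum_mul]
      refine Finset.sum_congr rfl fun s _ => by ring
    rw [this, hmoment j, zero_mul]
  have hkey : interp d ℓ u f x - F x
      = ∑ s : Fin d → Bool, w s * (F (vertex d ℓ u s) - F x - L (vertex d ℓ u s - x)) := by
    have hI : interp d ℓ u f x = ∑ s : Fin d → Bool, w s * F (vertex d ℓ u s) := by
      unfold interp
      exact Finset.sum_congr rfl fun s _ => by rw [hEq (hvmem s), mul_comm]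
    simp only [mul_sub]
    rw [Finset.sum_sub_distrib, Finset.sum_sub_distrib, hzero, sub_zero,
      ← Finset.sum_mul, hw_sum, one_mul, ← hI]
  have hconv : Convex ℝ E := convex_Icc _ _
  have hOp : ∀ z ∈ E, ‖fderiv ℝ F z - L‖ ≤ (d : ℝ) * (c₁ * ℓ ^ γ₁) := by
    intro z hz
    refine le_trans (opNorm_le_sum d _) ?_
    have h1 : ∀ j, |(fderiv ℝ F z - L) (Pi.single j 1)| ≤ c₁ * ℓ ^ γ₁ := by
      intro j
      have h2 : (fderiv ℝ F z - L) (Pi.single j 1) = (gradVec d F z - gradVec d F x) j := by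
        simp [gradVec, hL]
      rw [h2]
      calc |(gradVec d F z - gradVec d F x) j| ≤ ‖gradVec d F z - gradVec d F x‖ := by
            simpa using norm_le_pi_norm (gradVec d F z - gradVec d F x) j
        _ ≤ c₁ * ‖z - x‖ ^ γ₁ := hH z hz x hx
        _ ≤ c₁ * ℓ ^ γ₁ := by
            refine mul_le_mul_of_nonneg_left ?_ hc.le
            exact Real.rpow_le_rpow (norm_nonneg _) (hdiffnorm z hz x hx) hγ0.le
    calc ∑ j, |(fderiv ℝ F z - L) (Pi.single j 1)| ≤ ∑ _j : Fin d, c₁ * ℓ ^ γ₁ :=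
          Finset.sum_le_sum fun j _ => h1 j
      _ = (d : ℝ) * (c₁ * ℓ ^ γ₁) := by
          rw [Finset.sum_const, Finset.card_univ, Fintype.card_fin, nsmul_eq_mul]
  have hTaylor : ∀ s : Fin d → Bool,
      |F (vertex d ℓ u s) - F x - L (vertex d ℓ u s - x)| ≤ ((d : ℝ) * (c₁ * ℓ ^ γ₁)) * ℓ := by
    intro s
    have hder : ∀ z ∈ E, HasFDerivWithinAt (fun z => F z - L z) (fderiv ℝ F z - L) E z :=
      fun z _ => ((hF.differentiable one_ne_zero z).hasFDerivAt.sub L.hasFDerivAt).hasFDerivWithinAt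
    have hmv := hconv.norm_image_sub_le_of_norm_hasFDerivWithin_le hder hOp hx (hvmem s)
    have heq : (F (vertex d ℓ u s) - L (vertex d ℓ u s)) - (F x - L x)
        = F (vertex d ℓ u s) - F x - L (vertex d ℓ u s - x) := by
      rw [map_sub]; ring
    rw [heq, Real.norm_eq_abs] at hmv
    refine hmv.trans ?_
    refine mul_le_mul_of_nonneg_left (hdiffnorm _ (hvmem s) _ hx) ?_
    have : (0 : ℝ) < ℓ ^ γ₁ := Real.rpow_pos_of_pos hℓ0 _
    positivity
  have hB : (0 : ℝ) ≤ ((d : ℝ) * (c₁ * ℓ ^ γ₁)) * ℓ := by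
    have : (0 : ℝ) < ℓ ^ γ₁ := Real.rpow_pos_of_pos hℓ0 _
    positivity
  calc |interp d ℓ u f x - f x|
      = |∑ s : Fin d → Bool, w s * (F (vertex d ℓ u s) - F x - L (vertex d ℓ u s - x))| := by
        rw [hEq hx, hkey]
    _ ≤ ∑ s : Fin d → Bool, |w s * (F (vertex d ℓ u s) - F x - L (vertex d ℓ u s - x))| :=
        Finset.abs_sum_le_sum_abs _ _
    _ ≤ ∑ s : Fin d → Bool, w s * (((d : ℝ) * (c₁ * ℓ ^ γ₁)) * ℓ) := by
        refine Finset.sum_le_sum fun s _ => ?_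
        rw [abs_mul, abs_of_nonneg (hw_nonneg s)]
        exact mul_le_mul_of_nonneg_left (hTaylor s) (hw_nonneg s)
    _ = ((d : ℝ) * (c₁ * ℓ ^ γ₁)) * ℓ := by rw [← Finset.sum_mul, hw_sum, one_mul]
    _ = c₁ * d * ℓ ^ (1 + γ₁) := by
        rw [Real.rpow_add hℓ0, Real.rpow_one]; ring
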